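/- Suppose f : (0,∞) → ℂ satisfies t^p f(t) ∼ ∑_{r=0}^∞ b_r t^r as t → 0⁺, where f(t) = ∑_{n} c_n e^{-t λ_n} for a sequence λ_n → ∞ of positive reals and summable weights making the zeta function ζ(z) = ∑_n c_n λ_n^{-z} absolutely convergent for Re z > p. Then ζ admits a meromorphic continuation to ℂ with at most simple poles at z = p, p−1, ..., 1, and Res_{z=k} ζ(z) = b_{p−k}/Γ(k) for k ∈ {1, ..., p}; moreover ζ(0) = b_p (minus the n-sum of terms with λ_n = 0, assumed absent). -/

import Mathlib

set_option maxHeartbeats 1000000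


/-- Asymptotic expansion of `φ` at `0⁺` with coefficients `a`. -/
def HasAsympExp (φ : ℝ → ℂ) (a : ℕ → ℂ) : Prop :=
  ∀ N : ℕ, ∃ ε > (0:ℝ), ∃ M : ℝ, ∀ t : ℝ, 0 < t → t < ε →
    ‖φ t - ∑ r ∈ Finset.range (N + 1), a r * (t : ℂ) ^ r‖ ≤ M * t ^ (N + 1)

open MeasureTheory Set Filter Asymptotics Topology
open scoped Nat

namespace ZHK

noncomputable def F (lam : ℕ → ℝ) (c : ℕ → ℂ) (t : ℝ) : ℂ :=
  ∑' n : ℕ, c n * (Real.exp (-t * lam n) : ℂ)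

variable {lam : ℕ → ℝ} {c : ℕ → ℂ}

/-- summability of the weighted exponentials for every `s > 0`. -/
lemma summable_exp (hlam : ∀ n, 0 < lam n) {m : ℕ}
    (hSm : Summable fun n => ‖c n‖ / lam n ^ m) {s : ℝ} (hs : 0 < s) :
    Summable fun n => ‖c n‖ * Real.exp (-s * lam n) := by
  refine Summable.of_nonneg_of_le (fun n => by positivity)
    (fun n => ?_) ((hSm.mul_left ((m ! : ℝ) / s ^ m)))
  have h1 : 0 < s * lam n := mul_pos hs (hlam n)
  have h2 : Real.exp (-(s * lam n)) ≤ (m ! : ℝ) / (s * lam n) ^ m := by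
    rw [Real.exp_neg, inv_eq_one_div, div_le_div_iff₀ (Real.exp_pos _) (by positivity), one_mul]
    exact ((div_le_iff₀ (by positivity)).mp
      (Real.pow_div_factorial_le_exp _ h1.le m)).trans_eq (mul_comm _ _)
  rw [neg_mul]
  calc ‖c n‖ * Real.exp (-(s * lam n)) ≤ ‖c n‖ * ((m ! : ℝ) / (s * lam n) ^ m) :=
        mul_le_mul_of_nonneg_left h2 (norm_nonneg _)
    _ = (m ! : ℝ) / s ^ m * (‖c n‖ / lam n ^ m) := by
        rw [mul_pow]; field_simp
  done

lemma summable_term (hlam : ∀ n, 0 < lam n) {m : ℕ}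
    (hSm : Summable fun n => ‖c n‖ / lam n ^ m) {t : ℝ} (ht : 0 < t) :
    Summable fun n : ℕ => c n * (Real.exp (-t * lam n) : ℂ) := by
  refine Summable.of_norm ?_
  have := summable_exp hlam hSm ht
  refine this.congr fun n => ?_
  rw [norm_mul, Complex.norm_real, Real.norm_eq_abs, abs_of_pos (Real.exp_pos _)]

lemma hasSum_F (hlam : ∀ n, 0 < lam n) {m : ℕ}
    (hSm : Summable fun n => ‖c n‖ / lam n ^ m) {t : ℝ} (ht : 0 < t) :
    HasSum (fun n : ℕ => c n * (Real.exp (-t * lam n) : ℂ)) (F lam c t) :=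
  (summable_term hlam hSm ht).hasSum

/-- Continuity of `F` on `Ioi 0`. -/
lemma continuousOn_F (hlam : ∀ n, 0 < lam n) {m : ℕ}
    (hSm : Summable fun n => ‖c n‖ / lam n ^ m) :
    ContinuousOn (F lam c) (Ioi 0) := by
  intro t₀ ht₀
  rw [mem_Ioi] at ht₀
  apply ContinuousAt.continuousWithinAt
  set s : ℝ := t₀ / 2 with hs
  have hs0 : 0 < s := by positivity
  have hcont : Continuous (fun t : ℝ => ∑' n : ℕ, c n * (Real.exp (-(max t s) * lam n) : ℂ)) := by
    refine continuous_tsum (u := fun n => ‖c n‖ * Real.exp (-s * lam n)) (fun n => ?_)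
      (summable_exp hlam hSm hs0) (fun n t => ?_)
    · exact continuous_const.mul (Complex.continuous_ofReal.comp
        (Real.continuous_exp.comp (((continuous_id.max continuous_const).neg).mul
          continuous_const)))
    · rw [norm_mul, Complex.norm_real, Real.norm_eq_abs, abs_of_pos (Real.exp_pos _)]
      refine mul_le_mul_of_nonneg_left (Real.exp_le_exp.mpr ?_) (norm_nonneg _)
      have := le_max_right t s
      nlinarith [(hlam n).le]
  refine hcont.continuousAt.congr ?_
  filter_upwards [isOpen_Ioi.mem_nhds (show s < t₀ by rw [hs]; linarith)] with t ht
  rw [mem_Ioi] at ht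
  simp only [F, max_eq_left ht.le]

/-- A uniform positive lower bound for the `lam n`. -/
lemma exists_delta (hlam : ∀ n, 0 < lam n)
    (hlim : Filter.Tendsto lam Filter.atTop Filter.atTop) :
    ∃ δ : ℝ, 0 < δ ∧ ∀ n, δ ≤ lam n := by
  obtain ⟨N, hN⟩ := (hlim.eventually_ge_atTop 1).exists_forall_of_atTop
  refine ⟨min 1 ((Finset.range (N + 1)).inf' ⟨N, Finset.self_mem_range_succ N⟩ lam), ?_, ?_⟩
  · exact lt_min one_pos ((Finset.lt_inf'_iff _).mpr fun n _ => hlam n)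
  · intro n
    rcases le_or_gt n N with h | h
    · exact le_trans (min_le_right _ _)
        (Finset.inf'_le _ (Finset.mem_range_succ_iff.mpr h))
    · exact le_trans (min_le_left _ _) (hN n h.le)

/-- Exponential decay of `F` at infinity. -/
lemma isBigO_F_atTop (hlam : ∀ n, 0 < lam n) {m : ℕ}
    (hSm : Summable fun n => ‖c n‖ / lam n ^ m)
    {δ : ℝ} (hδ0 : 0 < δ) (hδ : ∀ n, δ ≤ lam n) :
    (F lam c) =O[atTop] fun t => Real.exp (-δ * t) := by
  set C : ℝ := (∑' n : ℕ, ‖c n‖ * Real.exp (-lam n)) * Real.exp δ with hC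
  refine IsBigO.of_bound C ?_
  filter_upwards [eventually_ge_atTop (1 : ℝ)] with t ht
  have hsum1 : Summable fun n => ‖c n‖ * Real.exp (-lam n) := by
    simpa using summable_exp hlam hSm one_pos
  have hsumt : Summable fun n => ‖c n‖ * Real.exp (-t * lam n) :=
    summable_exp hlam hSm (by linarith)
  have h1 : ‖F lam c t‖ ≤ ∑' n, ‖c n‖ * Real.exp (-t * lam n) := by
    refine (norm_tsum_le_tsum_norm ?_).trans_eq ?_
    · refine hsumt.congr fun n => ?_
      rw [norm_mul, Complex.norm_real, Real.norm_eq_abs, abs_of_pos (Real.exp_pos _)]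
    · refine tsum_congr fun n => ?_
      rw [norm_mul, Complex.norm_real, Real.norm_eq_abs, abs_of_pos (Real.exp_pos _)]
  have h2 : ∑' n, ‖c n‖ * Real.exp (-t * lam n)
      ≤ ∑' n, (‖c n‖ * Real.exp (-lam n)) * (Real.exp δ * Real.exp (-δ * t)) := by
    refine Summable.tsum_le_tsum (fun n => ?_) hsumt (hsum1.mul_right _)
    rw [mul_assoc, ← Real.exp_add, ← Real.exp_add]
    refine mul_le_mul_of_nonneg_left (Real.exp_le_exp.mpr ?_) (norm_nonneg _)
    have h3 := hδ n
    nlinarith [(hlam n).le]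
  rw [tsum_mul_right] at h2
  rw [Real.norm_eq_abs, abs_of_pos (Real.exp_pos _)]
  calc ‖F lam c t‖ ≤ _ := h1.trans h2
    _ = C * Real.exp (-δ * t) := by rw [hC]; ring

lemma locInt_indicator {f : ℝ → ℂ} {s t : Set ℝ}
    (hf : LocallyIntegrableOn f s) (ht : MeasurableSet t) :
    LocallyIntegrableOn (t.indicator f) s := by
  intro x hx
  obtain ⟨u, hu, hint⟩ := hf x hx
  exact ⟨u, hu, hint.indicator ht⟩

noncomputable def Find (lam : ℕ → ℝ) (c : ℕ → ℂ) : ℝ → ℂ := (Ioi (1:ℝ)).indicator (F lam c)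

lemma Find_isBigO_atTop (hlam : ∀ n, 0 < lam n) {m : ℕ}
    (hSm : Summable fun n => ‖c n‖ / lam n ^ m)
    {δ : ℝ} (hδ0 : 0 < δ) (hδ : ∀ n, δ ≤ lam n) :
    (Find lam c) =O[atTop] fun t => Real.exp (-δ * t) :=
  (isBigO_of_le atTop fun t => norm_indicator_le_norm_self _ _).trans
    (isBigO_F_atTop hlam hSm hδ0 hδ)

lemma Find_isBigO_bot (lam : ℕ → ℝ) (c : ℕ → ℂ) (b' : ℝ) :
    (Find lam c) =O[𝓝[>] (0:ℝ)] (· ^ (-b')) := by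
  refine IsBigO.of_bound 0 ?_
  filter_upwards [Ioo_mem_nhdsGT_of_mem (by norm_num : (0:ℝ) ∈ Ico (0:ℝ) 1)] with t ht
  rw [Find, indicator_of_notMem (by simp [mem_Ioi]; linarith [ht.2] : t ∉ Ioi (1:ℝ)), norm_zero,
    zero_mul]

lemma Find_locInt (hlam : ∀ n, 0 < lam n) {m : ℕ}
    (hSm : Summable fun n => ‖c n‖ / lam n ^ m) :
    LocallyIntegrableOn (Find lam c) (Ioi 0) :=
  locInt_indicator
    ((continuousOn_F hlam hSm).locallyIntegrableOn measurableSet_Ioi) measurableSet_Ioi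

lemma Find_mellin_diff (hlam : ∀ n, 0 < lam n) {m : ℕ}
    (hSm : Summable fun n => ‖c n‖ / lam n ^ m)
    (hlim : Filter.Tendsto lam Filter.atTop Filter.atTop) :
    Differentiable ℂ (mellin (Find lam c)) := by
  obtain ⟨δ, hδ0, hδ⟩ := exists_delta hlam hlim
  intro s
  exact mellin_differentiableAt_of_isBigO_rpow_exp hδ0 (Find_locInt hlam hSm)
    (Find_isBigO_atTop hlam hSm hδ0 hδ) (Find_isBigO_bot lam c (s.re - 1))
    (by linarith)

lemma Find_mellinConv (hlam : ∀ n, 0 < lam n) {m : ℕ}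
    (hSm : Summable fun n => ‖c n‖ / lam n ^ m)
    (hlim : Filter.Tendsto lam Filter.atTop Filter.atTop) (s : ℂ) :
    MellinConvergent (Find lam c) s := by
  obtain ⟨δ, hδ0, hδ⟩ := exists_delta hlam hlim
  exact mellinConvergent_of_isBigO_rpow_exp hδ0 (Find_locInt hlam hSm)
    (Find_isBigO_atTop hlam hSm hδ0 hδ) (Find_isBigO_bot lam c (s.re - 1))
    (by linarith)

noncomputable def SmallA (lam : ℕ → ℝ) (c : ℕ → ℂ) (p : ℕ) (b : ℕ → ℂ) (N : ℕ) : ℝ → ℂ :=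
  fun t => F lam c t - ∑ r ∈ Finset.range (N + 1), b r * (t : ℂ) ^ ((r : ℂ) - (p : ℂ))

noncomputable def Gind (lam : ℕ → ℝ) (c : ℕ → ℂ) (p : ℕ) (b : ℕ → ℂ) (N : ℕ) : ℝ → ℂ :=
  (Ioc (0:ℝ) 1).indicator (SmallA lam c p b N)

noncomputable def hind (p r : ℕ) : ℝ → ℂ :=
  (Ioc (0:ℝ) 1).indicator (fun t : ℝ => (t : ℂ) ^ ((r : ℂ) - (p : ℂ)))

lemma cpow_sub_eq {t : ℝ} (ht : 0 < t) (r p : ℕ) :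
    (t : ℂ) ^ ((r : ℂ) - (p : ℂ)) = (t : ℂ) ^ r * ((t : ℂ) ^ p)⁻¹ := by
  rw [Complex.cpow_sub _ _ (by exact_mod_cast ht.ne'), Complex.cpow_natCast,
    Complex.cpow_natCast, div_eq_mul_inv]

variable {p : ℕ} {b : ℕ → ℂ}

lemma Gind_isBigO_bot (hlam : ∀ n, 0 < lam n)
    (hasy : HasAsympExp (fun t : ℝ => (t : ℂ) ^ p *
      ∑' n : ℕ, c n * (Real.exp (-t * lam n) : ℂ)) b) (N : ℕ) :
    (Gind lam c p b N) =O[𝓝[>] (0:ℝ)] (· ^ (-((p : ℝ) - ((N : ℝ) + 1)))) := by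
  obtain ⟨ε, hε, M, hM⟩ := hasy N
  refine IsBigO.of_bound M ?_
  filter_upwards [Ioo_mem_nhdsGT_of_mem
    (by constructor <;> [norm_num; exact lt_min hε one_pos] : (0:ℝ) ∈ Ico 0 (min ε 1))]
    with t ht
  obtain ⟨ht0, ht1⟩ := ht
  have htε : t < ε := lt_of_lt_of_le ht1 (min_le_left _ _)
  have ht1' : t ≤ 1 := le_of_lt (lt_of_lt_of_le ht1 (min_le_right _ _))
  have htne : (t : ℂ) ≠ 0 := by exact_mod_cast ht0.ne'
  have hpow : ((t:ℂ) ^ p) ≠ 0 := pow_ne_zero _ htne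
  rw [Gind, indicator_of_mem (by exact ⟨ht0, ht1'⟩ : t ∈ Ioc (0:ℝ) 1)]
  have hid : SmallA lam c p b N t
      = ((t:ℂ) ^ p)⁻¹ * (((t:ℂ) ^ p) * F lam c t
          - ∑ r ∈ Finset.range (N + 1), b r * (t : ℂ) ^ r) := by
    rw [SmallA, mul_sub, Finset.mul_sum, inv_mul_cancel_left₀ hpow]
    congr 1
    refine Finset.sum_congr rfl fun r _ => ?_
    rw [cpow_sub_eq ht0]
    ring
  have hnorm : ‖SmallA lam c p b N t‖ ≤ (t ^ p)⁻¹ * (M * t ^ (N + 1)) := by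
    rw [hid, norm_mul, norm_inv, norm_pow, Complex.norm_real, Real.norm_eq_abs,
      abs_of_pos ht0]
    refine mul_le_mul_of_nonneg_left ?_ (by positivity)
    exact hM t ht0 htε
  refine hnorm.trans ?_
  have hre : t ^ (-((p : ℝ) - ((N : ℝ) + 1))) = (t ^ p)⁻¹ * t ^ (N + 1) := by
    rw [neg_sub, Real.rpow_sub ht0]
    rw [show ((N:ℝ) + 1) = ((N + 1 : ℕ) : ℝ) by push_cast; ring, Real.rpow_natCast,
      Real.rpow_natCast, div_eq_inv_mul]
  rw [Real.norm_eq_abs, abs_of_pos (Real.rpow_pos_of_pos ht0 _), hre]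
  exact le_of_eq (by ring)

lemma Gind_isBigO_top (lam : ℕ → ℝ) (c : ℕ → ℂ) (p : ℕ) (b : ℕ → ℂ) (N : ℕ) :
    (Gind lam c p b N) =O[atTop] (fun t => Real.exp (-1 * t)) := by
  refine IsBigO.of_bound 0 ?_
  filter_upwards [eventually_gt_atTop (1:ℝ)] with t ht
  rw [Gind, indicator_of_notMem (by simp [mem_Ioc]; intro h; linarith : t ∉ Ioc (0:ℝ) 1),
    norm_zero, zero_mul]

lemma SmallA_continuousOn (hlam : ∀ n, 0 < lam n) {m : ℕ}
    (hSm : Summable fun n => ‖c n‖ / lam n ^ m) (N : ℕ) :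
    ContinuousOn (SmallA lam c p b N) (Ioi 0) := by
  refine (continuousOn_F hlam hSm).sub ?_
  refine continuousOn_finset_sum _ fun r _ => ?_
  refine ContinuousOn.mul continuousOn_const ?_
  intro t ht
  exact (Complex.continuousAt_ofReal_cpow_const _ _
    (Or.inr (ne_of_gt ht))).continuousWithinAt

lemma Gind_locInt (hlam : ∀ n, 0 < lam n) {m : ℕ}
    (hSm : Summable fun n => ‖c n‖ / lam n ^ m) (N : ℕ) :
    LocallyIntegrableOn (Gind lam c p b N) (Ioi 0) :=
  locInt_indicator ((SmallA_continuousOn hlam hSm N).locallyIntegrableOn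
    measurableSet_Ioi) measurableSet_Ioc

lemma Gind_mellin_diff (hlam : ∀ n, 0 < lam n) {m : ℕ}
    (hSm : Summable fun n => ‖c n‖ / lam n ^ m)
    (hasy : HasAsympExp (fun t : ℝ => (t : ℂ) ^ p *
      ∑' n : ℕ, c n * (Real.exp (-t * lam n) : ℂ)) b) (N : ℕ)
    {s : ℂ} (hs : (p : ℝ) - ((N : ℝ) + 1) < s.re) :
    DifferentiableAt ℂ (mellin (Gind lam c p b N)) s :=
  mellin_differentiableAt_of_isBigO_rpow_exp one_pos (Gind_locInt hlam hSm N)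
    (Gind_isBigO_top lam c p b N) (Gind_isBigO_bot hlam hasy N) hs

lemma Gind_mellinConv (hlam : ∀ n, 0 < lam n) {m : ℕ}
    (hSm : Summable fun n => ‖c n‖ / lam n ^ m)
    (hasy : HasAsympExp (fun t : ℝ => (t : ℂ) ^ p *
      ∑' n : ℕ, c n * (Real.exp (-t * lam n) : ℂ)) b) (N : ℕ)
    {s : ℂ} (hs : (p : ℝ) - ((N : ℝ) + 1) < s.re) :
    MellinConvergent (Gind lam c p b N) s :=
  mellinConvergent_of_isBigO_rpow_exp one_pos (Gind_locInt hlam hSm N)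
    (Gind_isBigO_top lam c p b N) (Gind_isBigO_bot hlam hasy N) hs

lemma hind_hasMellin (p r : ℕ) {s : ℂ} (hs : (p : ℝ) - r < s.re) :
    HasMellin (hind p r) s (1 / (s - ((p : ℂ) - r))) := by
  have h := hasMellin_cpow_Ioc ((r : ℂ) - (p : ℂ)) (s := s)
    (by simp only [Complex.sub_re, Complex.natCast_re]; linarith)
  exact ⟨h.1, by rw [hind, h.2]; congr 1; ring⟩

lemma F_decomp (lam : ℕ → ℝ) (c : ℕ → ℂ) (p : ℕ) (b : ℕ → ℂ) (N : ℕ) {t : ℝ} (ht : 0 < t) :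
    F lam c t = Find lam c t + Gind lam c p b N t
      + ∑ r ∈ Finset.range (N + 1), b r * hind p r t := by
  rcases le_or_gt t 1 with h | h
  · have hmem : t ∈ Ioc (0:ℝ) 1 := ⟨ht, h⟩
    rw [Find, indicator_of_notMem (by simp only [mem_Ioi, not_lt]; exact h),
      Gind, indicator_of_mem hmem, SmallA]
    have hh : ∀ r : ℕ, hind p r t = (t : ℂ) ^ ((r : ℂ) - (p : ℂ)) :=
      fun r => indicator_of_mem hmem _
    simp only [hh]
    ring
  · have hmem : t ∉ Ioc (0:ℝ) 1 := by simp only [mem_Ioc, not_and, not_le]; intro; exact h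
    rw [Find, indicator_of_mem (mem_Ioi.mpr h), Gind, indicator_of_notMem hmem]
    have hh : ∀ r : ℕ, hind p r t = 0 := fun r => indicator_of_notMem hmem _
    simp only [hh, mul_zero, Finset.sum_const_zero, add_zero]

lemma mellin_split (hlam : ∀ n, 0 < lam n) {m : ℕ}
    (hSm : Summable fun n => ‖c n‖ / lam n ^ m)
    (hlim : Filter.Tendsto lam Filter.atTop Filter.atTop)
    (hasy : HasAsympExp (fun t : ℝ => (t : ℂ) ^ p *
      ∑' n : ℕ, c n * (Real.exp (-t * lam n) : ℂ)) b) (N : ℕ)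
    {z : ℂ} (hz : (p : ℝ) < z.re) :
    mellin (F lam c) z = mellin (Find lam c) z + mellin (Gind lam c p b N) z
      + ∑ r ∈ Finset.range (N + 1), b r * (1 / (z - ((p : ℂ) - r))) := by
  have h1 : MellinConvergent (Find lam c) z := Find_mellinConv hlam hSm hlim z
  have h2 : MellinConvergent (Gind lam c p b N) z :=
    Gind_mellinConv hlam hSm hasy N (by push_cast; linarith)
  have h3 : ∀ r ∈ Finset.range (N + 1), HasMellin (hind p r) z (1 / (z - ((p:ℂ) - r))) :=
    fun r _ => hind_hasMellin p r (by have : (0:ℝ) ≤ r := Nat.cast_nonneg r; linarith)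
  have hsum : IntegrableOn
      (fun t : ℝ => ∑ r ∈ Finset.range (N + 1), b r • ((t : ℂ) ^ (z - 1) • hind p r t))
      (Ioi 0) := by
    refine integrable_finset_sum _ fun r hr => ((h3 r hr).1.smul (b r))
  have key : mellin (F lam c) z
      = ∫ t in Ioi (0:ℝ), ((t : ℂ) ^ (z - 1) • Find lam c t
          + ((t : ℂ) ^ (z - 1) • Gind lam c p b N t
            + ∑ r ∈ Finset.range (N + 1), b r • ((t : ℂ) ^ (z - 1) • hind p r t))) := by
    rw [mellin]
    refine setIntegral_congr_fun measurableSet_Ioi fun t ht => ?_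
    simp only [smul_eq_mul]
    rw [F_decomp lam c p b N ht, mul_add, mul_add, Finset.mul_sum, add_assoc]
    congr 2
    exact Finset.sum_congr rfl fun r _ => by ring
  rw [key]
  calc (∫ t in Ioi (0:ℝ), ((t : ℂ) ^ (z - 1) • Find lam c t
          + ((t : ℂ) ^ (z - 1) • Gind lam c p b N t
            + ∑ r ∈ Finset.range (N + 1), b r • ((t : ℂ) ^ (z - 1) • hind p r t))))
      = mellin (Find lam c) z + ∫ t in Ioi (0:ℝ),
          ((t : ℂ) ^ (z - 1) • Gind lam c p b N t
            + ∑ r ∈ Finset.range (N + 1), b r • ((t : ℂ) ^ (z - 1) • hind p r t)) :=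
        integral_add h1 (h2.add hsum)
    _ = mellin (Find lam c) z + (mellin (Gind lam c p b N) z
          + ∫ t in Ioi (0:ℝ), ∑ r ∈ Finset.range (N + 1),
              b r • ((t : ℂ) ^ (z - 1) • hind p r t)) := by
        rw [integral_add h2 hsum]; rfl
    _ = mellin (Find lam c) z + (mellin (Gind lam c p b N) z
          + ∑ r ∈ Finset.range (N + 1), b r • ∫ t in Ioi (0:ℝ),
              ((t : ℂ) ^ (z - 1) • hind p r t)) := by
        rw [integral_finset_sum (f := fun (r : ℕ) (t : ℝ) =>
            b r • ((t : ℂ) ^ (z - 1) • hind p r t)) _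
          (fun r _ => by exact (h3 r (by assumption)).1.smul (b r))]
        congr 2
        exact Finset.sum_congr rfl fun r _ => integral_smul _ _
    _ = mellin (Find lam c) z + mellin (Gind lam c p b N) z
          + ∑ r ∈ Finset.range (N + 1), b r * (1 / (z - ((p : ℂ) - r))) := by
        rw [← add_assoc]
        congr 1
        exact Finset.sum_congr rfl fun r hr => by
          rw [smul_eq_mul]; congr 1; exact (h3 r hr).2

lemma mellin_Gind_step (hlam : ∀ n, 0 < lam n) {m : ℕ}
    (hSm : Summable fun n => ‖c n‖ / lam n ^ m)
    (hasy : HasAsympExp (fun t : ℝ => (t : ℂ) ^ p *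
      ∑' n : ℕ, c n * (Real.exp (-t * lam n) : ℂ)) b) (N : ℕ)
    {z : ℂ} (hz : (p : ℝ) - ((N : ℝ) + 1) < z.re) :
    mellin (Gind lam c p b N) z
      = mellin (Gind lam c p b (N + 1)) z
        + b (N + 1) * (1 / (z - ((p : ℂ) - (N + 1 : ℕ)))) := by
  have h2 : MellinConvergent (Gind lam c p b (N + 1)) z :=
    Gind_mellinConv hlam hSm hasy (N + 1) (by push_cast; push_cast at hz; linarith)
  have h3 : HasMellin (hind p (N + 1)) z (1 / (z - ((p:ℂ) - (N + 1 : ℕ)))) :=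
    hind_hasMellin p (N + 1) (by push_cast; push_cast at hz; linarith)
  have key : mellin (Gind lam c p b N) z
      = ∫ t in Ioi (0:ℝ), ((t : ℂ) ^ (z - 1) • Gind lam c p b (N + 1) t
          + b (N + 1) • ((t : ℂ) ^ (z - 1) • hind p (N + 1) t)) := by
    rw [mellin]
    refine setIntegral_congr_fun measurableSet_Ioi fun t ht => ?_
    have hdecomp : Gind lam c p b N t
        = Gind lam c p b (N + 1) t + b (N + 1) * hind p (N + 1) t := by
      rcases em (t ∈ Ioc (0:ℝ) 1) with hmem | hmem
      · rw [Gind, Gind, hind, indicator_of_mem hmem, indicator_of_mem hmem,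
          indicator_of_mem hmem, SmallA, SmallA,
          Finset.sum_range_succ (f := fun r : ℕ => b r * (t : ℂ) ^ ((r : ℂ) - (p : ℂ)))
            (n := N + 1)]
        push_cast
        ring
      · rw [Gind, Gind, hind, indicator_of_notMem hmem, indicator_of_notMem hmem,
          indicator_of_notMem hmem, mul_zero, add_zero]
    rw [hdecomp]
    simp only [smul_eq_mul]
    ring
  rw [key]
  have hadd : (∫ t in Ioi (0:ℝ), ((t : ℂ) ^ (z - 1) • Gind lam c p b (N + 1) t
          + b (N + 1) • ((t : ℂ) ^ (z - 1) • hind p (N + 1) t)))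
      = (∫ t in Ioi (0:ℝ), (t : ℂ) ^ (z - 1) • Gind lam c p b (N + 1) t)
        + ∫ t in Ioi (0:ℝ), b (N + 1) • ((t : ℂ) ^ (z - 1) • hind p (N + 1) t) :=
    integral_add h2 (h3.1.smul (b (N + 1)))
  rw [hadd, integral_smul]
  congr 1
  rw [smul_eq_mul]
  congr 1
  exact h3.2


lemma mellin_F_eq (hlam : ∀ n, 0 < lam n) {m : ℕ}
    (hSm : Summable fun n => ‖c n‖ / lam n ^ m) {z : ℂ} (hz : 0 < z.re)
    (hzsum : Summable fun n => c n * (lam n : ℂ) ^ (-z)) :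
    mellin (F lam c) z = Complex.Gamma z * ∑' n : ℕ, c n * (lam n : ℂ) ^ (-z) := by
  have hF : ∀ t ∈ Ioi (0:ℝ), HasSum (fun n => c n * (Real.exp (-lam n * t) : ℂ)) (F lam c t) := by
    intro t ht
    have h := hasSum_F hlam hSm (mem_Ioi.mp ht)
    have he : (fun n => c n * (Real.exp (-lam n * t) : ℂ))
        = fun n => c n * (Real.exp (-t * lam n) : ℂ) := by
      funext n; rw [neg_mul, mul_comm (lam n) t, ← neg_mul]
    rw [he]; exact h
  have hsum : Summable fun n => ‖c n‖ / (lam n) ^ z.re := by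
    refine (summable_norm_iff.mpr hzsum).congr fun n => ?_
    rw [norm_mul,
      Complex.norm_cpow_eq_rpow_re_of_pos (hlam n), Complex.neg_re,
      Real.rpow_neg (hlam n).le, div_eq_mul_inv]
  have h := hasSum_mellin (a := c) (p := lam) (F := F lam c)
    (fun n => Or.inr (hlam n)) hz hF hsum
  rw [← h.tsum_eq, ← tsum_mul_left]
  refine tsum_congr fun n => ?_
  rw [Complex.cpow_neg, div_eq_mul_inv]
  ring

lemma Gamma_prod (z : ℂ) (hz : ∀ j : ℕ, z + (j : ℂ) ≠ 0) (m : ℕ) :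
    Complex.Gamma (z + (m : ℂ) + 1) = Complex.Gamma z * ∏ j ∈ Finset.range (m + 1), (z + (j:ℂ)) := by
  induction m with
  | zero =>
      have h0 : z ≠ 0 := by simpa using hz 0
      simp [Complex.Gamma_add_one z h0, mul_comm]
  | succ m ih =>
      have h1 : z + ((m + 1 : ℕ) : ℂ) + 1 = (z + (m : ℂ) + 1) + 1 := by push_cast; ring
      have h2 : z + (m : ℂ) + 1 ≠ 0 := by
        have := hz (m + 1)
        intro hc; apply this; push_cast; linear_combination hc
      rw [h1, Complex.Gamma_add_one _ h2, ih]
      conv_rhs => rw [Finset.prod_range_succ]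
      push_cast; ring

noncomputable def Efun (p r : ℕ) (z : ℂ) : ℂ :=
  if r < p then (Complex.Gamma z)⁻¹ * (z - ((p : ℂ) - (r : ℂ)))⁻¹
  else (∏ j ∈ Finset.range (r - p), (z + (j:ℂ))) * (Complex.Gamma (z + ((r - p : ℕ) : ℂ) + 1))⁻¹

lemma Efun_eq (p r : ℕ) {z : ℂ} (hz : ∀ m' : ℕ, z ≠ -(m' : ℂ)) :
    Efun p r z = (Complex.Gamma z)⁻¹ * (z - ((p : ℂ) - (r : ℂ)))⁻¹ := by
  rw [Efun]
  split_ifs with h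
  · rfl
  · push_neg at h
    set m := r - p with hm
    have hzj : ∀ j : ℕ, z + (j:ℂ) ≠ 0 := fun j hc => hz j (by linear_combination hc)
    have hG := Gamma_prod z hzj m
    have hGz : Complex.Gamma z ≠ 0 := Complex.Gamma_ne_zero hz
    have hprod : (∏ j ∈ Finset.range m, (z + (j:ℂ))) ≠ 0 :=
      Finset.prod_ne_zero_iff.mpr fun j _ => hzj j
    have hzm : z + (m : ℂ) ≠ 0 := hzj m
    have hpr : (p : ℂ) - (r : ℂ) = -(m : ℂ) := by
      rw [hm, Nat.cast_sub h]; push_cast; ring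
    rw [hG, Finset.prod_range_succ, hpr, sub_neg_eq_add]
    rw [mul_inv, mul_inv]
    field_simp

lemma diff_prod (m : ℕ) : Differentiable ℂ fun z : ℂ => ∏ j ∈ Finset.range m, (z + (j:ℂ)) := by
  induction m with
  | zero => simpa using differentiable_const (1 : ℂ)
  | succ m ih =>
      simp only [Finset.prod_range_succ]
      exact ih.mul (differentiable_id.add_const _)

lemma Efun_analyticAt (p r : ℕ) {z₀ : ℂ} (h1 : r < p → z₀ ≠ ((p - r : ℕ) : ℂ)) :
    AnalyticAt ℂ (Efun p r) z₀ := by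
  by_cases hrp : r < p
  · have hE : Efun p r = fun z => (Complex.Gamma z)⁻¹ * (z - ((p : ℂ) - (r : ℂ)))⁻¹ := by
      funext z; rw [Efun, if_pos hrp]
    rw [hE]
    refine AnalyticAt.mul ?_ ?_
    · exact (Complex.differentiable_one_div_Gamma.analyticAt z₀)
    · refine AnalyticAt.inv ((analyticAt_id.sub analyticAt_const)) ?_
      have : ((p : ℂ) - (r : ℂ)) = ((p - r : ℕ) : ℂ) := by
        rw [Nat.cast_sub hrp.le]
      rw [this]
      exact sub_ne_zero.mpr (h1 hrp)
  · have hE : Efun p r = fun z => (∏ j ∈ Finset.range (r - p), (z + (j:ℂ)))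
        * (Complex.Gamma (z + ((r - p : ℕ) : ℂ) + 1))⁻¹ := by
      funext z; rw [Efun, if_neg hrp]
    rw [hE]
    have hdiff : Differentiable ℂ (fun z : ℂ => (∏ j ∈ Finset.range (r - p), (z + (j:ℂ)))
        * (Complex.Gamma (z + ((r - p : ℕ) : ℂ) + 1))⁻¹) := by
      refine (diff_prod (r - p)).mul ?_
      have := Complex.differentiable_one_div_Gamma.comp
        ((differentiable_id.add_const (((r - p : ℕ) : ℂ) + 1)))
      exact fun z => by simpa [Function.comp_def, add_assoc] using this z
    exact hdiff.analyticAt z₀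

noncomputable def ZN (lam : ℕ → ℝ) (c : ℕ → ℂ) (p : ℕ) (b : ℕ → ℂ) (N : ℕ) (z : ℂ) : ℂ :=
  (mellin (Find lam c) z + mellin (Gind lam c p b N) z) * (Complex.Gamma z)⁻¹
    + ∑ r ∈ Finset.range (N + 1), b r * Efun p r z

lemma re_pos_ne_neg_nat {z : ℂ} (hz : 0 < z.re) : ∀ m' : ℕ, z ≠ -(m' : ℂ) := by
  intro m' hc
  rw [hc] at hz
  simp only [Complex.neg_re, Complex.natCast_re] at hz
  have : (0:ℝ) ≤ (m' : ℝ) := Nat.cast_nonneg m'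
  linarith

lemma ZN_eq_zeta (hlam : ∀ n, 0 < lam n) {m : ℕ}
    (hSm : Summable fun n => ‖c n‖ / lam n ^ m)
    (hlim : Filter.Tendsto lam Filter.atTop Filter.atTop)
    (hasy : HasAsympExp (fun t : ℝ => (t : ℂ) ^ p *
      ∑' n : ℕ, c n * (Real.exp (-t * lam n) : ℂ)) b) (N : ℕ)
    {z : ℂ} (hz : (p : ℝ) < z.re)
    (hzsum : Summable fun n => c n * (lam n : ℂ) ^ (-z)) :
    ZN lam c p b N z = ∑' n : ℕ, c n * (lam n : ℂ) ^ (-z) := by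
  have hz0 : 0 < z.re := by
    have : (0:ℝ) ≤ (p : ℝ) := Nat.cast_nonneg p
    linarith
  have hznn := re_pos_ne_neg_nat hz0
  have hGz : Complex.Gamma z ≠ 0 := Complex.Gamma_ne_zero hznn
  have hmell := mellin_F_eq hlam hSm hz0 hzsum
  have hsplit := mellin_split hlam hSm hlim hasy N hz
  rw [ZN]
  have hEs : ∑ r ∈ Finset.range (N + 1), b r * Efun p r z
      = ∑ r ∈ Finset.range (N + 1), b r * ((Complex.Gamma z)⁻¹ * (z - ((p:ℂ) - (r:ℂ)))⁻¹) :=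
    Finset.sum_congr rfl fun r _ => by rw [Efun_eq p r hznn]
  rw [hEs]
  have halg : (mellin (Find lam c) z + mellin (Gind lam c p b N) z) * (Complex.Gamma z)⁻¹
      + ∑ r ∈ Finset.range (N + 1), b r * ((Complex.Gamma z)⁻¹ * (z - ((p:ℂ) - (r:ℂ)))⁻¹)
      = (mellin (F lam c) z) * (Complex.Gamma z)⁻¹ := by
    have hsum2 : ∑ r ∈ Finset.range (N + 1), b r * ((Complex.Gamma z)⁻¹ * (z - ((p:ℂ) - (r:ℂ)))⁻¹)
        = (∑ r ∈ Finset.range (N + 1), b r * (1/(z - ((p:ℂ) - (r:ℂ)))))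
          * (Complex.Gamma z)⁻¹ := by
      rw [Finset.sum_mul]
      exact Finset.sum_congr rfl fun r _ => by rw [one_div]; ring
    rw [hsum2, hsplit, add_mul, add_mul]
    ring
  rw [halg, hmell, mul_comm, ← mul_assoc, inv_mul_cancel₀ hGz, one_mul]

lemma ZN_step (hlam : ∀ n, 0 < lam n) {m : ℕ}
    (hSm : Summable fun n => ‖c n‖ / lam n ^ m)
    (hasy : HasAsympExp (fun t : ℝ => (t : ℂ) ^ p *
      ∑' n : ℕ, c n * (Real.exp (-t * lam n) : ℂ)) b) (N : ℕ)
    {z : ℂ} (hz : (p : ℝ) - ((N : ℝ) + 1) < z.re) :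
    ZN lam c p b (N + 1) z = ZN lam c p b N z := by
  by_cases hcase : ∀ m' : ℕ, z ≠ -(m' : ℂ)
  · have hstep := mellin_Gind_step hlam hSm hasy N hz
    rw [ZN, ZN, hstep]
    conv_lhs => rw [Finset.sum_range_succ]
    rw [Efun_eq p (N + 1) hcase]
    push_cast
    rw [one_div]
    ring
  · push_neg at hcase
    obtain ⟨m', hm'⟩ := hcase
    have hG0 : Complex.Gamma z = 0 := by rw [hm']; exact Complex.Gamma_neg_nat_eq_zero m'
    rw [ZN, ZN, hG0, inv_zero, mul_zero, mul_zero, zero_add, zero_add,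
      Finset.sum_range_succ]
    suffices hS : Efun p (N + 1) z = 0 by rw [hS, mul_zero, add_zero]
    have hre : z.re = -(m' : ℝ) := by rw [hm']; simp
    rw [hre] at hz
    have hnat : m' + p < N + 1 := by
      have : (m' : ℝ) + (p : ℝ) < (N : ℝ) + 1 := by linarith
      exact_mod_cast this
    rw [Efun, if_neg (by omega)]
    refine mul_eq_zero_of_left
      (Finset.prod_eq_zero (Finset.mem_range.mpr (by omega : m' < N + 1 - p)) ?_) _
    rw [hm']
    ring

lemma ZN_chain (hlam : ∀ n, 0 < lam n) {m : ℕ}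
    (hSm : Summable fun n => ‖c n‖ / lam n ^ m)
    (hasy : HasAsympExp (fun t : ℝ => (t : ℂ) ^ p *
      ∑' n : ℕ, c n * (Real.exp (-t * lam n) : ℂ)) b) {z : ℂ}
    (N K : ℕ) (hNK : N ≤ K) (hz : (p : ℝ) - ((N : ℝ) + 1) < z.re) :
    ZN lam c p b K z = ZN lam c p b N z := by
  induction K, hNK using Nat.le_induction with
  | base => rfl
  | succ K hK ih =>
      rw [← ih]
      refine ZN_step hlam hSm hasy K ?_
      have : (N : ℝ) ≤ (K : ℝ) := by exact_mod_cast hK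
      linarith

lemma ZN_analyticAt (hlam : ∀ n, 0 < lam n) {m : ℕ}
    (hSm : Summable fun n => ‖c n‖ / lam n ^ m)
    (hlim : Filter.Tendsto lam Filter.atTop Filter.atTop)
    (hasy : HasAsympExp (fun t : ℝ => (t : ℂ) ^ p *
      ∑' n : ℕ, c n * (Real.exp (-t * lam n) : ℂ)) b) (N : ℕ)
    {z₀ : ℂ} (hz₀ : (p : ℝ) - ((N : ℝ) + 1) < z₀.re)
    (hpole : ∀ r ∈ Finset.range (N + 1), AnalyticAt ℂ (Efun p r) z₀) :
    AnalyticAt ℂ (ZN lam c p b N) z₀ := by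
  refine AnalyticAt.add (AnalyticAt.mul (AnalyticAt.add ?_ ?_)
    (Complex.differentiable_one_div_Gamma.analyticAt z₀)) ?_
  · exact (Find_mellin_diff hlam hSm hlim).analyticAt z₀
  · refine DifferentiableOn.analyticAt
      (s := {z : ℂ | (p : ℝ) - ((N : ℝ) + 1) < z.re}) ?_ ?_
    · intro z hz
      exact (Gind_mellin_diff hlam hSm hasy N hz).differentiableWithinAt
    · exact (IsOpen.mem_nhds (isOpen_lt continuous_const Complex.continuous_re) hz₀)
  · exact Finset.analyticAt_fun_sum _ fun r hr => analyticAt_const.mul (hpole r hr)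

lemma head_analyticAt (hlam : ∀ n, 0 < lam n) {m : ℕ}
    (hSm : Summable fun n => ‖c n‖ / lam n ^ m)
    (hlim : Filter.Tendsto lam Filter.atTop Filter.atTop)
    (hasy : HasAsympExp (fun t : ℝ => (t : ℂ) ^ p *
      ∑' n : ℕ, c n * (Real.exp (-t * lam n) : ℂ)) b) (N : ℕ)
    {z₀ : ℂ} (hz₀ : (p : ℝ) - ((N : ℝ) + 1) < z₀.re) :
    AnalyticAt ℂ (fun z => (mellin (Find lam c) z + mellin (Gind lam c p b N) z)
      * (Complex.Gamma z)⁻¹) z₀ := by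
  refine AnalyticAt.mul (AnalyticAt.add ?_ ?_)
    (Complex.differentiable_one_div_Gamma.analyticAt z₀)
  · exact (Find_mellin_diff hlam hSm hlim).analyticAt z₀
  · refine DifferentiableOn.analyticAt
      (s := {z : ℂ | (p : ℝ) - ((N : ℝ) + 1) < z.re}) ?_ ?_
    · intro z hz
      exact (Gind_mellin_diff hlam hSm hasy N hz).differentiableWithinAt
    · exact (IsOpen.mem_nhds (isOpen_lt continuous_const Complex.continuous_re) hz₀)

lemma ZN_residue (hlam : ∀ n, 0 < lam n) {m : ℕ}
    (hSm : Summable fun n => ‖c n‖ / lam n ^ m)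
    (hlim : Filter.Tendsto lam Filter.atTop Filter.atTop)
    (hasy : HasAsympExp (fun t : ℝ => (t : ℂ) ^ p *
      ∑' n : ℕ, c n * (Real.exp (-t * lam n) : ℂ)) b)
    (K k : ℕ) (hk1 : 1 ≤ k) (hkp : k ≤ p)
    (hzK : (p : ℝ) - ((K : ℝ) + 1) < ((k : ℂ)).re) :
    Filter.Tendsto (fun z : ℂ => (z - (k : ℂ)) * ZN lam c p b K z)
      (nhdsWithin (k : ℂ) {(k : ℂ)}ᶜ)
      (nhds (b (p - k) / Complex.Gamma (k : ℂ))) := by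
  set r₀ := p - k with hr₀def
  have hr₀ : r₀ < p := by omega
  have hK : r₀ < K + 1 := by
    have h1 : ((k:ℂ)).re = (k:ℝ) := by simp
    rw [h1] at hzK
    have h4 : ((p - k : ℕ) : ℝ) < (K : ℝ) + 1 := by rw [Nat.cast_sub hkp]; linarith
    exact_mod_cast h4
  have hr₀mem : r₀ ∈ Finset.range (K + 1) := Finset.mem_range.mpr hK
  set A : ℂ → ℂ := fun z => (mellin (Find lam c) z + mellin (Gind lam c p b K) z)
      * (Complex.Gamma z)⁻¹
      + ∑ r ∈ (Finset.range (K + 1)).erase r₀, b r * Efun p r z with hA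
  have hZA : ∀ z, ZN lam c p b K z = A z + b r₀ * Efun p r₀ z := by
    intro z
    rw [ZN, hA, ← Finset.add_sum_erase _ _ hr₀mem]
    ring
  have hAan : AnalyticAt ℂ A (k : ℂ) := by
    refine AnalyticAt.add (head_analyticAt hlam hSm hlim hasy K hzK)
      (Finset.analyticAt_fun_sum _ fun r hr => analyticAt_const.mul
        (Efun_analyticAt p r fun hrp => ?_))
    have hrne : r ≠ r₀ := (Finset.mem_erase.mp hr).1
    have : p - r ≠ k := by omega
    intro hc
    exact this (by exact_mod_cast hc.symm)
  have hEr₀ : ∀ z : ℂ, Efun p r₀ z = (Complex.Gamma z)⁻¹ * (z - (k : ℂ))⁻¹ := by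
    intro z
    rw [Efun, if_pos hr₀]
    congr 2
    rw [hr₀def, Nat.cast_sub hkp]
    ring
  have hL : Filter.Tendsto (fun z : ℂ => (z - (k : ℂ)) * A z
        + b r₀ * (Complex.Gamma z)⁻¹) (nhds (k : ℂ))
      (nhds (b (p - k) / Complex.Gamma (k : ℂ))) := by
    have h1 : ContinuousAt (fun z : ℂ => (z - (k : ℂ)) * A z
        + b r₀ * (Complex.Gamma z)⁻¹) (k : ℂ) :=
      (((continuous_id.sub continuous_const).continuousAt).mul hAan.continuousAt).add
        (continuousAt_const.mul
          (Complex.differentiable_one_div_Gamma.continuous.continuousAt))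
    have h2 := h1.tendsto
    have h3 : ((k:ℂ) - (k:ℂ)) * A (k:ℂ) + b r₀ * (Complex.Gamma (k:ℂ))⁻¹
        = b (p - k) / Complex.Gamma (k : ℂ) := by
      rw [sub_self, zero_mul, zero_add, div_eq_mul_inv, hr₀def]
    rw [h3] at h2
    exact h2
  refine Filter.Tendsto.congr' ?_ (hL.mono_left nhdsWithin_le_nhds)
  filter_upwards [self_mem_nhdsWithin] with z hz
  have hzk : z - (k : ℂ) ≠ 0 := sub_ne_zero.mpr hz
  rw [hZA z, hEr₀ z]
  have hcalc : (z - (k:ℂ)) * (A z + b r₀ * ((Complex.Gamma z)⁻¹ * (z - (k:ℂ))⁻¹))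
      = (z - (k:ℂ)) * A z + b r₀ * (Complex.Gamma z)⁻¹
        * ((z - (k:ℂ)) * (z - (k:ℂ))⁻¹) := by ring
  rw [hcalc, mul_inv_cancel₀ hzk, mul_one]

lemma ZN_at_zero (lam : ℕ → ℝ) (c : ℕ → ℂ) {p : ℕ} (b : ℕ → ℂ) (N : ℕ) (hpN : p ≤ N) :
    ZN lam c p b N 0 = b p := by
  rw [ZN, Complex.Gamma_zero, inv_zero, mul_zero, zero_add]
  rw [Finset.sum_eq_single_of_mem p (Finset.mem_range.mpr (by omega))]
  · rw [Efun, if_neg (lt_irrefl p), Nat.sub_self]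
    simp [Complex.Gamma_one]
  · intro r hr hrp
    rcases lt_or_gt_of_ne hrp with h | h
    · rw [Efun, if_pos h, Complex.Gamma_zero, inv_zero, zero_mul, mul_zero]
    · rw [Efun, if_neg (by omega)]
      have hprod : (∏ j ∈ Finset.range (r - p), ((0:ℂ) + (j:ℂ))) = 0 :=
        Finset.prod_eq_zero (Finset.mem_range.mpr (by omega : 0 < r - p)) (by simp)
      rw [hprod, zero_mul, mul_zero]

end ZHK

/-- Heat-kernel-to-zeta correspondence: if `t^p ∑ₙ cₙ e^{-tλₙ} ∼ ∑ᵣ bᵣ tʳ`, then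
`ζ(z) = ∑ₙ cₙ λₙ^{-z}` extends meromorphically to `ℂ` with at most simple poles
at `z = 1,…,p`, `Res_{z=k} ζ = b_{p−k}/Γ(k)`, and `ζ(0) = b_p`. -/
theorem zeta_from_heat_kernel
    (p : ℕ) (hp : 1 ≤ p) (lam : ℕ → ℝ) (c : ℕ → ℂ)
    (hlam : ∀ n, 0 < lam n)
    (hlim : Filter.Tendsto lam Filter.atTop Filter.atTop)
    (hconv : ∀ z : ℂ, (p : ℝ) < z.re → Summable (fun n => c n * (lam n : ℂ) ^ (-z)))
    (b : ℕ → ℂ)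
    (hasy : HasAsympExp
      (fun t : ℝ => (t : ℂ) ^ p * ∑' n : ℕ, c n * (Real.exp (-t * lam n) : ℂ)) b) :
    ∃ Z : ℂ → ℂ,
      (∀ z : ℂ, (p : ℝ) < z.re → Z z = ∑' n : ℕ, c n * (lam n : ℂ) ^ (-z)) ∧
      (∀ z : ℂ, (¬ ∃ k : ℕ, 1 ≤ k ∧ k ≤ p ∧ z = (k : ℂ)) → AnalyticAt ℂ Z z) ∧
      (∀ k : ℕ, 1 ≤ k → k ≤ p →
        Filter.Tendsto (fun z : ℂ => (z - (k : ℂ)) * Z z)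
          (nhdsWithin (k : ℂ) {(k : ℂ)}ᶜ)
          (nhds (b (p - k) / Complex.Gamma (k : ℂ)))) ∧
      Z 0 = b p := by
  classical
  have hSm : Summable fun n => ‖c n‖ / lam n ^ (p + 1) := by
    have h := summable_norm_iff.mpr (hconv ((p:ℂ) + 1)
      (by simp only [Complex.add_re, Complex.natCast_re, Complex.one_re]; linarith))
    refine h.congr fun n => ?_
    rw [norm_mul,
      Complex.norm_cpow_eq_rpow_re_of_pos (hlam n),
      show (-((p:ℂ) + 1)).re = -((p:ℝ) + 1) by simp,
      Real.rpow_neg (hlam n).le,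
      show ((p:ℝ) + 1) = ((p + 1 : ℕ) : ℝ) by push_cast; ring,
      Real.rpow_natCast, div_eq_mul_inv]
  set NN : ℂ → ℕ := fun z => p + 1 + ⌈-z.re⌉₊ with hNN
  set Z : ℂ → ℂ := fun z => ZHK.ZN lam c p b (NN z) z with hZdef
  have hNNz : ∀ z : ℂ, (p:ℝ) - ((NN z : ℝ) + 1) < z.re := by
    intro z
    have h1 : -z.re ≤ (⌈-z.re⌉₊ : ℝ) := Nat.le_ceil _
    have h2 : ((NN z : ℝ)) = (p:ℝ) + 1 + (⌈-z.re⌉₊ : ℝ) := by rw [hNN]; push_cast; ring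
    rw [h2]; linarith
  have hlocal : ∀ z₀ : ℂ, ∃ K : ℕ, (p:ℝ) - ((K:ℝ) + 1) < z₀.re ∧ p ≤ K ∧
      ∀ᶠ z in nhds z₀, Z z = ZHK.ZN lam c p b K z := by
    intro z₀
    refine ⟨p + 1 + ⌈-z₀.re + 1⌉₊, ?_, by omega, ?_⟩
    · have hceil : -z₀.re + 1 ≤ (⌈-z₀.re + 1⌉₊ : ℝ) := Nat.le_ceil _
      have h2 : ((p + 1 + ⌈-z₀.re + 1⌉₊ : ℕ) : ℝ)
          = (p:ℝ) + 1 + (⌈-z₀.re + 1⌉₊ : ℝ) := by push_cast; ring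
      rw [h2]; linarith
    · filter_upwards [Metric.ball_mem_nhds z₀ one_pos] with z hz
      have hdist : dist z z₀ < 1 := Metric.mem_ball.mp hz
      have hre : |(z - z₀).re| ≤ ‖z - z₀‖ := Complex.abs_re_le_norm _
      have hre2 : -z.re ≤ -z₀.re + 1 := by
        have hd : ‖z - z₀‖ = dist z z₀ := by rw [Complex.dist_eq]
        have h3 : |z.re - z₀.re| < 1 := by
          have h2 : (z - z₀).re = z.re - z₀.re := by simp [Complex.sub_re]
          rw [← h2]
          exact lt_of_le_of_lt hre (by rw [hd]; exact hdist)
        have := (abs_lt.mp h3).1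
        linarith
      have hNle : NN z ≤ p + 1 + ⌈-z₀.re + 1⌉₊ := by
        rw [hNN]
        exact Nat.add_le_add_left (Nat.ceil_le_ceil hre2) _
      exact (ZHK.ZN_chain hlam hSm hasy (NN z) _ hNle (hNNz z)).symm
  refine ⟨Z, ?_, ?_, ?_, ?_⟩
  · intro z hz
    rw [hZdef]
    exact ZHK.ZN_eq_zeta hlam hSm hlim hasy (NN z) hz (hconv z hz)
  · intro z₀ hz₀
    push_neg at hz₀
    obtain ⟨K, hK1, hK2, hK3⟩ := hlocal z₀
    have hE : ∀ r ∈ Finset.range (K + 1), AnalyticAt ℂ (ZHK.Efun p r) z₀ := by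
      intro r hr
      refine ZHK.Efun_analyticAt p r fun hrp => ?_
      exact hz₀ (p - r) (by omega) (by omega)
    exact (ZHK.ZN_analyticAt hlam hSm hlim hasy K hK1 hE).congr
      (Filter.EventuallyEq.symm (hK3 : Z =ᶠ[nhds z₀] ZHK.ZN lam c p b K))
  · intro k hk1 hkp
    obtain ⟨K, hK1, hK2, hK3⟩ := hlocal (k : ℂ)
    have hres := ZHK.ZN_residue hlam hSm hlim hasy K k hk1 hkp hK1
    refine Filter.Tendsto.congr' ?_ hres
    filter_upwards [hK3.filter_mono nhdsWithin_le_nhds] with z hz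
    rw [hz]
  · have hNN0 : NN 0 = p + 1 := by rw [hNN]; simp
    rw [hZdef]
    show ZHK.ZN lam c p b (NN 0) 0 = b p
    rw [hNN0]
    exact ZHK.ZN_at_zero lam c b (p + 1) (by omega)
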